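/- Let G be a directed acyclic graph with topological order π, and suppose inserting edge (u,v) with π(u) > π(v) keeps the graph acyclic. Define W, S, T, Z as follows: W = {w : π(v) ≤ π(w) ≤ π(u)}, T the vertices of W reachable from v in G, S the vertices of W that reach u in G, Z = W \ (S ∪ T). Then the ordering obtained by replacing the segment of π on W by the sequence S, Z, T (each internally ordered by the old π, with all vertices outside W unchanged) is a topological order of G + (u,v). -/

import Mathlib

/-- In the setting of inserting an edge `(u,v)` with `π u > π v` into a DAG
with topological order `π` (keeping acyclicity), any relabeling `π'` that keeps vertices
outside `W` unchanged, maps `W` into the old label segment `[π v, π u]`, preserves the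
old relative order inside each of `S`, `Z`, `T`, and places all of `S` before all of `Z`
before all of `T`, is a topological order (injective and increasing along edges) of the
new graph `G + (u,v)`. -/
theorem reordered_labels_are_topological
    {V : Type*} (E : V → V → Prop) (π : V → ℕ)
    (hinj : Function.Injective π)
    (htopo : ∀ x y, E x y → π x < π y)
    (u v : V) (huv : π v < π u)
    (E' : V → V → Prop) (hE' : ∀ x y, E' x y ↔ (E x y ∨ (x = u ∧ y = v)))
    (hacyc : ∀ w : V, ¬ Relation.TransGen E' w w)
    (W S T Z : Set V)
    (hW : W = {w | π v ≤ π w ∧ π w ≤ π u})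
    (hT : T = {w ∈ W | Relation.ReflTransGen E v w})
    (hS : S = {w ∈ W | Relation.ReflTransGen E w u})
    (hZ : Z = W \ (S ∪ T))
    (π' : V → ℕ)
    (hout : ∀ w ∉ W, π' w = π w)
    (hseg : ∀ w ∈ W, π v ≤ π' w ∧ π' w ≤ π u)
    (hordS : ∀ a ∈ S, ∀ b ∈ S, π a < π b → π' a < π' b)
    (hordZ : ∀ a ∈ Z, ∀ b ∈ Z, π a < π b → π' a < π' b)
    (hordT : ∀ a ∈ T, ∀ b ∈ T, π a < π b → π' a < π' b)
    (hSZ : ∀ a ∈ S, ∀ b ∈ Z, π' a < π' b)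
    (hZT : ∀ a ∈ Z, ∀ b ∈ T, π' a < π' b)
    (hST : ∀ a ∈ S, ∀ b ∈ T, π' a < π' b) :
    Function.Injective π' ∧ ∀ x y, E' x y → π' x < π' y := by
  subst hW hT hS hZ
  -- S and T are disjoint
  have hdisj : ∀ w, Relation.ReflTransGen E w u → Relation.ReflTransGen E v w → False := by
    intro w hwu hvw
    have hvu : Relation.ReflTransGen E' v u :=
      (Relation.ReflTransGen.mono (fun a b h => (hE' a b).2 (Or.inl h)) _ _ (hvw.trans hwu))
    exact hacyc u (Relation.TransGen.head' ((hE' u v).2 (Or.inr ⟨rfl, rfl⟩)) hvu)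
  -- classification of elements of W
  have hclass : ∀ w ∈ {w | π v ≤ π w ∧ π w ≤ π u},
      w ∈ {w ∈ {w | π v ≤ π w ∧ π w ≤ π u} | Relation.ReflTransGen E w u} ∨
      w ∈ {w | π v ≤ π w ∧ π w ≤ π u} \
        ({w ∈ {w | π v ≤ π w ∧ π w ≤ π u} | Relation.ReflTransGen E w u} ∪
         {w ∈ {w | π v ≤ π w ∧ π w ≤ π u} | Relation.ReflTransGen E v w}) ∨
      w ∈ {w ∈ {w | π v ≤ π w ∧ π w ≤ π u} | Relation.ReflTransGen E v w} := by
    intro w hw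
    by_cases hs : Relation.ReflTransGen E w u
    · exact Or.inl ⟨hw, hs⟩
    by_cases ht : Relation.ReflTransGen E v w
    · exact Or.inr (Or.inr ⟨hw, ht⟩)
    · exact Or.inr (Or.inl ⟨hw, by simp only [Set.mem_union, Set.mem_sep_iff]; tauto⟩)
  -- main edge property, first for old edges
  have key : ∀ x y, E x y → π' x < π' y := by
    intro x y hxy
    have hπ : π x < π y := htopo x y hxy
    by_cases hxW : x ∈ {w | π v ≤ π w ∧ π w ≤ π u} <;>
      by_cases hyW : y ∈ {w | π v ≤ π w ∧ π w ≤ π u}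
    · -- both in W
      rcases hclass x hxW with hxS | hxZ | hxT
      · rcases hclass y hyW with hyS | hyZ | hyT
        · exact hordS x hxS y hyS hπ
        · exact hSZ x hxS y hyZ
        · exact hST x hxS y hyT
      · rcases hclass y hyW with hyS | hyZ | hyT
        · exfalso
          have hxS : x ∈ {w ∈ {w | π v ≤ π w ∧ π w ≤ π u} | Relation.ReflTransGen E w u} :=
            ⟨hxW, hyS.2.head hxy⟩
          have := hxZ.2
          simp only [Set.mem_union, Set.mem_sep_iff] at this
          exact this (Or.inl ⟨hxS.1, hxS.2⟩)
        · exact hordZ x hxZ y hyZ hπ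
        · exact hZT x hxZ y hyT
      · -- x ∈ T, so y ∈ T
        have hyT : y ∈ {w ∈ {w | π v ≤ π w ∧ π w ≤ π u} | Relation.ReflTransGen E v w} :=
          ⟨hyW, hxT.2.tail hxy⟩
        exact hordT x hxT y hyT hπ
    · -- x ∈ W, y ∉ W : π y > π u
      have hyu : π u < π y := by
        simp only [Set.mem_setOf_eq, not_and, not_le] at hyW
        rcases lt_or_ge (π u) (π y) with h | h
        · exact h
        · exact absurd (hyW (le_of_lt (lt_of_le_of_lt hxW.1 hπ))) (not_lt.2 h)
      calc π' x ≤ π u := (hseg x hxW).2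
        _ < π y := hyu
        _ = π' y := (hout y hyW).symm
    · -- x ∉ W, y ∈ W : π x < π v
      have hxv : π x < π v := by
        simp only [Set.mem_setOf_eq, not_and, not_le] at hxW
        rcases lt_or_ge (π x) (π v) with h | h
        · exact h
        · exact absurd (hxW h) (not_lt.2 (le_of_lt (lt_of_lt_of_le hπ hyW.2)))
      calc π' x = π x := hout x hxW
        _ < π v := hxv
        _ ≤ π' y := (hseg y hyW).1
    · rw [hout x hxW, hout y hyW]; exact hπ
  have edge : ∀ x y, E' x y → π' x < π' y := by
    intro x y hxy
    rcases (hE' x y).1 hxy with h | ⟨rfl, rfl⟩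
    · exact key x y h
    · exact hST x ⟨⟨le_of_lt huv, le_refl _⟩, Relation.ReflTransGen.refl⟩
        y ⟨⟨le_refl _, le_of_lt huv⟩, Relation.ReflTransGen.refl⟩
  refine ⟨?_, edge⟩
  intro a b hab
  by_contra hne
  by_cases haW : a ∈ {w | π v ≤ π w ∧ π w ≤ π u} <;>
    by_cases hbW : b ∈ {w | π v ≤ π w ∧ π w ≤ π u}
  · -- both in W
    have hπab : π a ≠ π b := fun h => hne (hinj h)
    have same : ∀ X : Set V, (∀ p ∈ X, ∀ q ∈ X, π p < π q → π' p < π' q) →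
        a ∈ X → b ∈ X → False := by
      intro X hX ha hb
      rcases lt_trichotomy (π a) (π b) with h | h | h
      · exact absurd hab (ne_of_lt (hX a ha b hb h))
      · exact hπab h
      · exact absurd hab.symm (ne_of_lt (hX b hb a ha h))
    rcases hclass a haW with haS | haZ | haT <;> rcases hclass b hbW with hbS | hbZ | hbT
    · exact same _ hordS haS hbS
    · exact absurd hab (ne_of_lt (hSZ a haS b hbZ))
    · exact absurd hab (ne_of_lt (hST a haS b hbT))
    · exact absurd hab.symm (ne_of_lt (hSZ b hbS a haZ))
    · exact same _ hordZ haZ hbZ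
    · exact absurd hab (ne_of_lt (hZT a haZ b hbT))
    · exact absurd hab.symm (ne_of_lt (hST b hbS a haT))
    · exact absurd hab.symm (ne_of_lt (hZT b hbZ a haT))
    · exact same _ hordT haT hbT
  · have := hseg a haW
    rw [hab, hout b hbW] at this
    exact hbW this
  · have := hseg b hbW
    rw [← hab, hout a haW] at this
    exact haW this
  · rw [hout a haW, hout b hbW] at hab
    exact hne (hinj hab)
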